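/- Let n ≥ 2 and let J_n ⊂ ℤ[x_1, …, x_n] be the ideal generated by the elementary symmetric polynomials σ_1, …, σ_n. Then the Vandermonde determinant satisfies the congruence ∏_{1 ≤ j < i ≤ n} (x_i - x_j) ≡ n! · ∏_{k=1}^{n-1} x_{k+1}^k (mod J_n). -/

import Mathlib

open MvPolynomial

namespace Stmt12Aux

variable {n : ℕ}

/-- The monic polynomial with roots the variables in `S`. -/
noncomputable def PP (n : ℕ) (S : Finset (Fin n)) : Polynomial (MvPolynomial (Fin n) ℤ) :=
  ∏ j ∈ S, (Polynomial.X - Polynomial.C (MvPolynomial.X j))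

/-- The ideal generated by the non-leading coefficients of `PP n S`. -/
noncomputable def II (n : ℕ) (S : Finset (Fin n)) : Ideal (MvPolynomial (Fin n) ℤ) :=
  Ideal.span ((PP n S).coeff '' Set.Iio S.card)

lemma PP_monic (S : Finset (Fin n)) : (PP n S).Monic :=
  Polynomial.monic_prod_of_monic _ _ fun j _ => Polynomial.monic_X_sub_C _

lemma PP_natDegree (S : Finset (Fin n)) : (PP n S).natDegree = S.card := by
  rw [PP, Polynomial.natDegree_prod_of_monic]
  · simp
  · exact fun j _ => Polynomial.monic_X_sub_C _

lemma PP_coeff_card (S : Finset (Fin n)) : (PP n S).coeff S.card = 1 := by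
  have := (PP_monic S).leadingCoeff
  rwa [Polynomial.leadingCoeff, PP_natDegree] at this

lemma coeff_mem (S : Finset (Fin n)) {k : ℕ} (hk : k < S.card) :
    (PP n S).coeff k ∈ II n S :=
  Ideal.subset_span ⟨k, hk, rfl⟩

lemma PP_insert {a : Fin n} {S : Finset (Fin n)} (ha : a ∉ S) :
    PP n (insert a S) = (Polynomial.X - Polynomial.C (MvPolynomial.X a)) * PP n S :=
  Finset.prod_insert ha

/-- Lemma A: modulo `II n (insert a S)`, `coeff (card - j) (PP n S) ≡ X a ^ j`. -/
lemma coeff_sub_pow_mem {a : Fin n} {S : Finset (Fin n)} (ha : a ∉ S) :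
    ∀ j ≤ S.card, (PP n S).coeff (S.card - j) - (MvPolynomial.X a) ^ j
      ∈ II n (insert a S) := by
  intro j
  induction j with
  | zero =>
    intro _
    simp only [Nat.sub_zero, pow_zero, PP_coeff_card, sub_self]
    exact zero_mem _
  | succ j ih =>
    intro hj
    have hj' : j ≤ S.card := Nat.le_of_succ_le hj
    set m := S.card with hm
    have hsplit : m - j = (m - (j + 1)) + 1 := by omega
    have hcard' : (insert a S).card = m + 1 := by rw [Finset.card_insert_of_notMem ha]
    have hco : (PP n (insert a S)).coeff (m - (j+1) + 1)
        = (PP n S).coeff (m - (j+1)) - MvPolynomial.X a * (PP n S).coeff (m - (j+1) + 1) := by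
      rw [PP_insert ha, sub_mul, Polynomial.coeff_sub, Polynomial.coeff_X_mul,
        Polynomial.coeff_C_mul]
    have h1 : (PP n (insert a S)).coeff (m - (j+1) + 1) ∈ II n (insert a S) := by
      apply coeff_mem
      rw [hcard']
      omega
    have h2 : (PP n S).coeff (m - j) - (MvPolynomial.X a) ^ j ∈ II n (insert a S) := ih hj'
    rw [hsplit] at h2
    have key : (PP n S).coeff (m - (j+1)) - (MvPolynomial.X a) ^ (j+1)
        = (PP n (insert a S)).coeff (m - (j+1) + 1)
          + MvPolynomial.X a * ((PP n S).coeff (m - (j+1) + 1) - (MvPolynomial.X a) ^ j) := by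
      rw [hco]; ring
    rw [key]
    exact add_mem h1 (Ideal.mul_mem_left _ _ h2)

/-- Lemma B: `X a ^ j ∈ II n T` whenever `a ∈ T` and `T.card ≤ j`. -/
lemma pow_mem {a : Fin n} {T : Finset (Fin n)} (ha : a ∈ T) {j : ℕ} (hj : T.card ≤ j) :
    (MvPolynomial.X a : MvPolynomial (Fin n) ℤ) ^ j ∈ II n T := by
  have heval : Polynomial.eval (MvPolynomial.X a) (PP n T) = 0 := by
    rw [PP, Polynomial.eval_prod]
    exact Finset.prod_eq_zero ha (by simp)
  rw [Polynomial.eval_eq_sum_range, PP_natDegree, Finset.sum_range_succ, PP_coeff_card,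
    one_mul] at heval
  have hpow : (MvPolynomial.X a : MvPolynomial (Fin n) ℤ) ^ T.card
      = -∑ k ∈ Finset.range T.card, (PP n T).coeff k * (MvPolynomial.X a) ^ k := by
    linear_combination heval
  have hbase : (MvPolynomial.X a : MvPolynomial (Fin n) ℤ) ^ T.card ∈ II n T := by
    rw [hpow]
    exact neg_mem (Ideal.sum_mem _ fun k hk =>
      Ideal.mul_mem_right _ _ (coeff_mem T (Finset.mem_range.mp hk)))
  have : j = (j - T.card) + T.card := by omega
  rw [this, pow_add]
  exact Ideal.mul_mem_left _ _ hbase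

/-- Lemma C: multiplying an element of `II n S` by `X a ^ S.card` lands in the bigger ideal. -/
lemma mul_pow_mem {a : Fin n} {S : Finset (Fin n)} (ha : a ∉ S) {g : MvPolynomial (Fin n) ℤ}
    (hg : g ∈ II n S) :
    g * (MvPolynomial.X a) ^ S.card ∈ II n (insert a S) := by
  have hamem : a ∈ insert a S := Finset.mem_insert_self a S
  have hcard' : (insert a S).card = S.card + 1 := Finset.card_insert_of_notMem ha
  refine Submodule.span_induction ?_ ?_ ?_ ?_ hg
  · rintro x ⟨k, hk, rfl⟩
    simp only [Set.mem_Iio] at hk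
    have hkk : S.card - (S.card - k) = k := by omega
    have hA := coeff_sub_pow_mem ha (S.card - k) (by omega)
    rw [hkk] at hA
    have key : (PP n S).coeff k * (MvPolynomial.X a) ^ S.card
        = ((PP n S).coeff k - (MvPolynomial.X a) ^ (S.card - k)) * (MvPolynomial.X a) ^ S.card
          + (MvPolynomial.X a) ^ ((S.card - k) + S.card) := by
      rw [pow_add]; ring
    rw [key]
    refine add_mem (Ideal.mul_mem_right _ _ hA) (pow_mem hamem ?_)
    omega
  · simp
  · intro x y _ _ hx hy
    rw [add_mul]; exact add_mem hx hy
  · intro r x _ hx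
    rw [smul_eq_mul, mul_assoc]
    exact Ideal.mul_mem_left _ _ hx

/-- Lemma D: `∏_{j ∈ S} (X a - X j) ≡ (card S + 1) * X a ^ card S`. -/
lemma prod_sub_mem {a : Fin n} {S : Finset (Fin n)} (ha : a ∉ S) :
    (∏ j ∈ S, (MvPolynomial.X a - MvPolynomial.X j : MvPolynomial (Fin n) ℤ))
      - ((S.card : MvPolynomial (Fin n) ℤ) + 1) * (MvPolynomial.X a) ^ S.card
      ∈ II n (insert a S) := by
  have heval : (∏ j ∈ S, (MvPolynomial.X a - MvPolynomial.X j : MvPolynomial (Fin n) ℤ))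
      = Polynomial.eval (MvPolynomial.X a) (PP n S) := by
    rw [PP, Polynomial.eval_prod]
    simp
  rw [heval, Polynomial.eval_eq_sum_range, PP_natDegree]
  have hconst : ((S.card : MvPolynomial (Fin n) ℤ) + 1) * (MvPolynomial.X a) ^ S.card
      = ∑ _k ∈ Finset.range (S.card + 1), (MvPolynomial.X a) ^ S.card := by
    rw [Finset.sum_const, Finset.card_range, nsmul_eq_mul]
    push_cast
    ring
  rw [hconst, ← Finset.sum_sub_distrib]
  refine Ideal.sum_mem _ fun k hk => ?_
  have hk' : k ≤ S.card := Nat.lt_succ_iff.mp (Finset.mem_range.mp hk)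
  have hA := coeff_sub_pow_mem ha (S.card - k) (by omega)
  have hkk : S.card - (S.card - k) = k := by omega
  rw [hkk] at hA
  have key : (PP n S).coeff k * (MvPolynomial.X a) ^ k - (MvPolynomial.X a) ^ S.card
      = ((PP n S).coeff k - (MvPolynomial.X a) ^ (S.card - k)) * (MvPolynomial.X a) ^ k := by
    have : (MvPolynomial.X a : MvPolynomial (Fin n) ℤ) ^ S.card
        = (MvPolynomial.X a) ^ (S.card - k) * (MvPolynomial.X a) ^ k := by
      rw [← pow_add]; congr 1; omega
    rw [this]; ring
  rw [key]
  exact Ideal.mul_mem_right _ _ hA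

/-- The set of the first `m` variables. -/
def SS (n m : ℕ) : Finset (Fin n) := Finset.univ.filter (fun i => (i : ℕ) < m)

lemma SS_zero : SS n 0 = ∅ := by
  ext i; simp [SS]

lemma SS_succ {m : ℕ} (hm : m < n) : SS n (m + 1) = insert ⟨m, hm⟩ (SS n m) := by
  ext i
  simp only [SS, Finset.mem_filter, Finset.mem_univ, true_and, Finset.mem_insert,
    Fin.ext_iff]
  omega

lemma not_mem_SS {m : ℕ} (hm : m < n) : (⟨m, hm⟩ : Fin n) ∉ SS n m := by
  simp [SS]

lemma SS_card : ∀ m ≤ n, (SS n m).card = m := by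
  intro m
  induction m with
  | zero => intro _; simp [SS_zero]
  | succ m ih =>
    intro hm
    have hm' : m < n := hm
    rw [SS_succ hm', Finset.card_insert_of_notMem (not_mem_SS hm'), ih (le_of_lt hm')]

lemma main_ind : ∀ m ≤ n,
    (∏ i ∈ SS n m, ∏ j ∈ (SS n m).filter (fun j => j < i),
        (MvPolynomial.X i - MvPolynomial.X j : MvPolynomial (Fin n) ℤ))
      - (m.factorial : MvPolynomial (Fin n) ℤ) * ∏ i ∈ SS n m, (MvPolynomial.X i) ^ (i : ℕ)
      ∈ II n (SS n m) := by
  intro m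
  induction m with
  | zero =>
    intro _
    simp [SS_zero]
  | succ m ih =>
    intro hm
    have hm' : m < n := hm
    set a : Fin n := ⟨m, hm'⟩ with ha_def
    have hnot : a ∉ SS n m := not_mem_SS hm'
    have hcard : (SS n m).card = m := SS_card m (le_of_lt hm')
    rw [SS_succ hm']
    -- split off the new variable from the outer products
    have hfilter_a : (insert a (SS n m)).filter (fun j => j < a) = SS n m := by
      ext j
      simp only [Finset.mem_filter, Finset.mem_insert, SS, Finset.mem_univ, true_and,
        Fin.lt_def]
      constructor
      · rintro ⟨h1 | h1, h2⟩
        · omega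
        · simpa [SS, Fin.lt_def] using h1
      · intro h
        exact ⟨Or.inr (by simpa [SS] using h), by simpa [SS, Fin.lt_def, -Fin.val_fin_lt] using h⟩
    have hfilter_i : ∀ i ∈ SS n m,
        (insert a (SS n m)).filter (fun j => j < i) = (SS n m).filter (fun j => j < i) := by
      intro i hi
      have hi' : (i : ℕ) < m := by simpa [SS] using hi
      ext j
      simp only [Finset.mem_filter, Finset.mem_insert]
      constructor
      · rintro ⟨h1 | h1, h2⟩
        · exfalso; rw [h1] at h2; exact absurd h2 (by rw [Fin.lt_def, ha_def]; dsimp only; omega)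
        · exact ⟨h1, h2⟩
      · rintro ⟨h1, h2⟩; exact ⟨Or.inr h1, h2⟩
    rw [Finset.prod_insert hnot, Finset.prod_insert hnot, hfilter_a]
    have hprodcong : (∏ i ∈ SS n m, ∏ j ∈ (insert a (SS n m)).filter (fun j => j < i),
          (MvPolynomial.X i - MvPolynomial.X j : MvPolynomial (Fin n) ℤ))
        = ∏ i ∈ SS n m, ∏ j ∈ (SS n m).filter (fun j => j < i),
          (MvPolynomial.X i - MvPolynomial.X j : MvPolynomial (Fin n) ℤ) :=
      Finset.prod_congr rfl fun i hi => by rw [hfilter_i i hi]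
    rw [hprodcong]
    -- notation
    set Q : MvPolynomial (Fin n) ℤ := ∏ j ∈ SS n m, (MvPolynomial.X a - MvPolynomial.X j)
      with hQ
    set D : MvPolynomial (Fin n) ℤ := ∏ i ∈ SS n m,
      ∏ j ∈ (SS n m).filter (fun j => j < i), (MvPolynomial.X i - MvPolynomial.X j) with hD
    set P : MvPolynomial (Fin n) ℤ := ∏ i ∈ SS n m, (MvPolynomial.X i) ^ (i : ℕ) with hP
    have hg : D - (m.factorial : MvPolynomial (Fin n) ℤ) * P ∈ II n (SS n m) := ih hm'.le
    have hq : Q - ((m : MvPolynomial (Fin n) ℤ) + 1) * (MvPolynomial.X a) ^ m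
        ∈ II n (insert a (SS n m)) := by
      have := prod_sub_mem hnot
      rwa [hcard] at this
    have hgx : (D - (m.factorial : MvPolynomial (Fin n) ℤ) * P) * (MvPolynomial.X a) ^ m
        ∈ II n (insert a (SS n m)) := by
      have := mul_pow_mem hnot hg
      rwa [hcard] at this
    have hxa : ((a : ℕ) : ℕ) = m := rfl
    have key : Q * D - ((m + 1).factorial : MvPolynomial (Fin n) ℤ)
          * ((MvPolynomial.X a) ^ (a : ℕ) * P)
        = (Q - ((m : MvPolynomial (Fin n) ℤ) + 1) * (MvPolynomial.X a) ^ m)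
            * (D - (m.factorial : MvPolynomial (Fin n) ℤ) * P)
          + ((m : MvPolynomial (Fin n) ℤ) + 1)
            * ((D - (m.factorial : MvPolynomial (Fin n) ℤ) * P) * (MvPolynomial.X a) ^ m)
          + ((m.factorial : MvPolynomial (Fin n) ℤ) * P)
            * (Q - ((m : MvPolynomial (Fin n) ℤ) + 1) * (MvPolynomial.X a) ^ m) := by
      have : ((m + 1).factorial : MvPolynomial (Fin n) ℤ)
          = ((m : MvPolynomial (Fin n) ℤ) + 1) * (m.factorial : MvPolynomial (Fin n) ℤ) := by
        rw [Nat.factorial_succ]; push_cast; ring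
      rw [this, hxa]; ring
    rw [key]
    exact add_mem (add_mem (Ideal.mul_mem_right _ _ hq)
      (Ideal.mul_mem_left _ _ hgx)) (Ideal.mul_mem_left _ _ hq)

end Stmt12Aux

/-- In `ℤ[x_1, …, x_n]`, `n ≥ 2`, modulo the ideal generated by the elementary symmetric
polynomials `σ_1, …, σ_n`, the Vandermonde product `∏_{j<i}(x_i - x_j)` is congruent to
`n! · ∏_{k=1}^{n-1} x_{k+1}^k`. -/
theorem stmt12 (n : ℕ) (hn : 2 ≤ n) :
    (∏ i : Fin n, ∏ j ∈ Finset.univ.filter (fun j => j < i),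
        ((X i : MvPolynomial (Fin n) ℤ) - X j))
      - C ((n.factorial : ℤ)) * ∏ i : Fin n, (X i) ^ (i : ℕ)
    ∈ Ideal.span ((fun j => (esymm (Fin n) ℤ j : MvPolynomial (Fin n) ℤ)) ''
        Set.Icc 1 n) := by
  classical
  have huniv : Stmt12Aux.SS n n = Finset.univ := by
    ext i; simp [Stmt12Aux.SS, i.isLt]
  have hmain := Stmt12Aux.main_ind (n := n) n le_rfl
  rw [huniv] at hmain
  have hC : (C ((n.factorial : ℤ)) : MvPolynomial (Fin n) ℤ)
      = ((n.factorial : ℕ) : MvPolynomial (Fin n) ℤ) := by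
    simp
  rw [hC]
  have hcardu : (Finset.univ : Finset (Fin n)).card = n := by simp
  -- coefficients of `PP n univ` are signed elementary symmetric polynomials
  have hcoeff : ∀ k, k ≤ n → (Stmt12Aux.PP n Finset.univ).coeff k
      = (-1 : MvPolynomial (Fin n) ℤ) ^ (n - k) * esymm (Fin n) ℤ (n - k) := by
    intro k hk
    have hs : Stmt12Aux.PP n Finset.univ
        = ((Finset.univ.val.map (MvPolynomial.X : Fin n → MvPolynomial (Fin n) ℤ)).map
            (fun t => Polynomial.X - Polynomial.C t)).prod := by
      rw [Stmt12Aux.PP, Finset.prod_eq_multiset_prod, Multiset.map_map]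
      rfl
    have hcards : Multiset.card
        (Finset.univ.val.map (MvPolynomial.X : Fin n → MvPolynomial (Fin n) ℤ)) = n := by
      rw [Multiset.card_map]
      simpa using hcardu
    rw [hs, Multiset.prod_X_sub_C_coeff _ (by rw [hcards]; exact hk), hcards,
      esymm_eq_multiset_esymm]
  -- II n univ is contained in the span of the elementary symmetric polynomials
  have hle : Stmt12Aux.II n Finset.univ
      ≤ Ideal.span ((fun j => (esymm (Fin n) ℤ j : MvPolynomial (Fin n) ℤ)) ''
          Set.Icc 1 n) := by
    rw [Stmt12Aux.II, Ideal.span_le]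
    rintro x ⟨k, hk, rfl⟩
    rw [Set.mem_Iio, hcardu] at hk
    rw [hcoeff k hk.le]
    exact Ideal.mul_mem_left _ _
      (Ideal.subset_span ⟨n - k, ⟨by omega, by omega⟩, rfl⟩)
  exact hle hmain
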